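/- Let (X, ε) and (Y, η) be locally compact paracompact Hausdorff spaces with proper coarsely connected coarse structures and let π : Y → X be a coarse equivalence with coarse inverse ϖ : X → Y. Let X +_f W be a perspective compactification of (X, ε) that is Ψ-accessible, and let f* be the pullback of f with respect to π and id_W, so that the induced compactification of Y is Y +_{f*} W. Then Y +_{f*} W is ϖ(Ψ)-accessible, where ϖ(Ψ) = {ϖ ∘ γ : γ ∈ Ψ}; that is, (1) for every w ∈ W there is γ ∈ Ψ with f*(Cl_Y(Im(ϖ ∘ γ))) = {w}, and (2) f*(Cl_Y(Im(ϖ ∘ γ))) is a singleton for every γ ∈ Ψ. -/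

import Mathlib

namespace Paper

open Set Topology

/-! ### Coarse structures -/

/-- The inverse of a relation `e ⊆ X × X`. -/
def invRel {X : Type*} (e : Set (X × X)) : Set (X × X) := {p | (p.2, p.1) ∈ e}

/-- The composition of relations: `compRel e e' = {(a,b) | ∃ c, (a,c) ∈ e ∧ (c,b) ∈ e'}`.
This is `e' ∘ e` in the paper's notation. -/
def compRel {X : Type*} (e e' : Set (X × X)) : Set (X × X) :=
  {p | ∃ c, (p.1, c) ∈ e ∧ (c, p.2) ∈ e'}

/-- A coarse structure on a set `X`. -/
def IsCoarseStructure {X : Type*} (ε : Set (Set (X × X))) : Prop :=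
  Set.diagonal X ∈ ε ∧
  (∀ e ∈ ε, ∀ e' : Set (X × X), e' ⊆ e → e' ∈ ε) ∧
  (∀ e ∈ ε, ∀ e' ∈ ε, e ∪ e' ∈ ε) ∧
  (∀ e ∈ ε, invRel e ∈ ε) ∧
  (∀ e ∈ ε, ∀ e' ∈ ε, compRel e e' ∈ ε)

/-- The coarse structure generated by a family `A` of subsets of `X × X`:
the intersection of all coarse structures containing `A`. -/
def genCoarse {X : Type*} (A : Set (Set (X × X))) : Set (Set (X × X)) :=
  ⋂₀ {ε | IsCoarseStructure ε ∧ A ⊆ ε}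

/-- The `u`-neighbourhood `𝔅(B, u)` of a subset `B`. -/
def Bnh {X : Type*} (B : Set X) (u : Set (X × X)) : Set X := {x | ∃ y ∈ B, (x, y) ∈ u}

/-- A subset `B` is bounded for the coarse structure `ε` if `B × B ∈ ε`. -/
def CBounded {X : Type*} (ε : Set (Set (X × X))) (B : Set X) : Prop := B ×ˢ B ∈ ε

/-- A map is bornologous if it sends entourages to entourages. -/
def Bornologous {X Y : Type*} (ε : Set (Set (X × X))) (ζ : Set (Set (Y × Y)))
    (f : X → Y) : Prop :=
  ∀ e ∈ ε, Prod.map f f '' e ∈ ζ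

/-- A map is (coarsely) proper if preimages of bounded sets are bounded. -/
def CProper {X Y : Type*} (ε : Set (Set (X × X))) (ζ : Set (Set (Y × Y)))
    (f : X → Y) : Prop :=
  ∀ B : Set Y, CBounded ζ B → CBounded ε (f ⁻¹' B)

/-- A coarse map is a proper bornologous map. -/
def CoarseMap {X Y : Type*} (ε : Set (Set (X × X))) (ζ : Set (Set (Y × Y)))
    (f : X → Y) : Prop :=
  Bornologous ε ζ f ∧ CProper ε ζ f

/-- Two maps `f g : S → X` are close if `{(f s, g s) | s ∈ S}` is an entourage. -/
def Close {S X : Type*} (ε : Set (Set (X × X))) (f g : S → X) : Prop :=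
  Set.range (fun s => (f s, g s)) ∈ ε

/-- A coarse equivalence: a coarse map with a coarse quasi-inverse. -/
def CoarseEquiv {X Y : Type*} (ε : Set (Set (X × X))) (ζ : Set (Set (Y × Y)))
    (f : X → Y) : Prop :=
  CoarseMap ε ζ f ∧
    ∃ g : Y → X, CoarseMap ζ ε g ∧ Close ζ (f ∘ g) id ∧ Close ε (g ∘ f) id

/-- The subspace coarse structure on `A ⊆ Y`. -/
def SubCoarse {Y : Type*} (ζ : Set (Set (Y × Y))) (A : Set Y) : Set (Set (↥A × ↥A)) :=
  {e | Prod.map (Subtype.val : A → Y) (Subtype.val : A → Y) '' e ∈ ζ}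

/-- A coarse embedding: a coarse map which is a coarse equivalence onto its image with
the subspace coarse structure. -/
def CoarseEmbedding {X Y : Type*} (ε : Set (Set (X × X))) (ζ : Set (Set (Y × Y)))
    (f : X → Y) : Prop :=
  CoarseMap ε ζ f ∧ CoarseEquiv ε (SubCoarse ζ (Set.range f)) (Set.rangeFactorization f)

/-- A coarse space is coarsely connected if every pair lies in some entourage. -/
def CoarselyConnected {X : Type*} (ε : Set (Set (X × X))) : Prop :=
  ∀ x y : X, ∃ e ∈ ε, (x, y) ∈ e

/-- `A` is quasi-dense if `𝔅(A, e) = X` for some entourage `e`. -/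
def QuasiDense {X : Type*} (ε : Set (Set (X × X))) (A : Set X) : Prop :=
  ∃ e ∈ ε, Bnh A e = Set.univ

/-- A subset of a topological space is topologically bounded if its closure is compact. -/
def TopBounded {X : Type*} [TopologicalSpace X] (B : Set X) : Prop := IsCompact (closure B)

/-- A coarse structure on a topological space is proper if it contains a neighbourhood of
the diagonal and every bounded set is topologically bounded. -/
def ProperCoarse {X : Type*} [TopologicalSpace X] (ε : Set (Set (X × X))) : Prop :=
  (∃ e ∈ ε, e ∈ nhdsSet (Set.diagonal X)) ∧ ∀ B : Set X, CBounded ε B → TopBounded B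

/-! ### Artin–Wraith glueings -/

/-- An admissible map `f : Closed(X) → Closed(Y)`. -/
def Admissible {X Y : Type*} [TopologicalSpace X] [TopologicalSpace Y]
    (f : Set X → Set Y) : Prop :=
  (∀ A : Set X, IsClosed A → IsClosed (f A)) ∧
  (∀ A B : Set X, IsClosed A → IsClosed B → f (A ∪ B) = f A ∪ f B) ∧
  f ∅ = ∅

/-- The closed sets of the Artin–Wraith glueing `X +_f Y`. -/
def AWClosed {X Y : Type*} [TopologicalSpace X] [TopologicalSpace Y]
    (f : Set X → Set Y) : Set (Set (X ⊕ Y)) :=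
  {A | IsClosed (Sum.inl ⁻¹' A) ∧ IsClosed (Sum.inr ⁻¹' A) ∧
    Sum.inr '' f (Sum.inl ⁻¹' A) ⊆ A}

/-- The topology of the Artin–Wraith glueing `X +_f Y` on `X ⊕ Y`. (For admissible `f`,
the closed sets of this topology are exactly the members of `AWClosed f`.) -/
def AWTop {X Y : Type*} [TopologicalSpace X] [TopologicalSpace Y]
    (f : Set X → Set Y) : TopologicalSpace (X ⊕ Y) :=
  TopologicalSpace.generateFrom (compl '' AWClosed f)

/-- `X +_f W` is a (Hausdorff) compactification of `X`: a compact Hausdorff Artin–Wraith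
glueing in which `X` is dense. -/
def IsCompactification {X W : Type*} [TopologicalSpace X] [TopologicalSpace W]
    (f : Set X → Set W) : Prop :=
  Admissible f ∧
  @CompactSpace (X ⊕ W) (AWTop f) ∧
  @T2Space (X ⊕ W) (AWTop f) ∧
  @Dense (X ⊕ W) (AWTop f) (Set.range Sum.inl)

/-- A relation `e ⊆ X × X` is proper if `𝔅(B,e)` and `𝔅(B,e⁻¹)` are topologically
bounded for every topologically bounded `B`. -/
def ProperRel {X : Type*} [TopologicalSpace X] (e : Set (X × X)) : Prop :=
  ∀ B : Set X, TopBounded B → TopBounded (Bnh B e) ∧ TopBounded (Bnh B (invRel e))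

/-- `e` is a perspective subset of `X × X` with respect to the compactification `X +_f W`. -/
def PerspRel {X W : Type*} [TopologicalSpace X] [TopologicalSpace W]
    (f : Set X → Set W) (e : Set (X × X)) : Prop :=
  ProperRel e ∧
  ∀ y : W, ∀ V : Set (X ⊕ W), IsOpen[AWTop f] V → Sum.inr y ∈ V →
    ∃ U : Set (X ⊕ W), IsOpen[AWTop f] U ∧ Sum.inr y ∈ U ∧ U ⊆ V ∧
      ∀ p ∈ e, Sum.inl p.1 ∈ U → Sum.inl p.2 ∈ V

/-- A perspective compactification of the coarse space `(X, ε)`. -/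
def PerspCompactification {X W : Type*} [TopologicalSpace X] [TopologicalSpace W]
    (ε : Set (Set (X × X))) (f : Set X → Set W) : Prop :=
  IsCompactification f ∧ ∀ e ∈ ε, PerspRel f e

/-- The pullback of `f : Closed(X) → Closed(W)` with respect to `π : Y → X` and
`ϖ : Z → W`. -/
def pullbackAW {X Y Z W : Type*} [TopologicalSpace X] [TopologicalSpace Z]
    (f : Set X → Set W) (π : Y → X) (ϖ : Z → W) (A : Set Y) : Set Z :=
  closure (ϖ ⁻¹' (f (closure (π '' A))))

/-! ### Group actions -/

/-- `φ : G → X → X` is an action by homeomorphisms. -/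
def IsActionByHomeos {G X : Type*} [Group G] [TopologicalSpace X]
    (φ : G → X → X) : Prop :=
  (∀ g : G, Continuous (φ g)) ∧ (∀ x : X, φ 1 x = x) ∧
    ∀ g h : G, ∀ x : X, φ (g * h) x = φ g (φ h x)

/-- A properly discontinuous action. -/
def ProperlyDisc {G X : Type*} [TopologicalSpace X] (φ : G → X → X) : Prop :=
  ∀ K : Set X, IsCompact K → {g : G | (φ g '' K ∩ K).Nonempty}.Finite

/-- A cocompact action. -/
def CocompactAct {G X : Type*} [TopologicalSpace X] (φ : G → X → X) : Prop :=
  ∃ K : Set X, IsCompact K ∧ (⋃ g : G, φ g '' K) = Set.univ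

/-- The saturation `Sat(A) = {(φ(g,x), φ(g,x')) : g ∈ G, x, x' ∈ A}`. -/
def Sat {G X : Type*} (φ : G → X → X) (A : Set X) : Set (X × X) :=
  {p | ∃ g : G, ∃ x ∈ A, ∃ x' ∈ A, p = (φ g x, φ g x')}

/-- The coarse structure `ε_φ` on `X` generated by the saturations of topologically
bounded sets. -/
def coarseOfAction {G X : Type*} [TopologicalSpace X] (φ : G → X → X) :
    Set (Set (X × X)) :=
  genCoarse {e | ∃ A : Set X, TopBounded A ∧ e = Sat φ A}

/-- The saturation for the left multiplication action of a group on itself. -/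
def SatMul {G : Type*} [Group G] (U : Set G) : Set (G × G) :=
  {p | ∃ g : G, ∃ u ∈ U, ∃ u' ∈ U, p = (g * u, g * u')}

/-- The coarse structure `ε_G` on the group `G`, generated by the saturations of
finite subsets under the left multiplication action. -/
def coarseGroup (G : Type*) [Group G] : Set (Set (G × G)) :=
  genCoarse {e | ∃ U : Set G, U.Finite ∧ e = SatMul U}

/-- The compactification `X +_f W` is group-theoretically perspective with respect to the
action `φ`. -/
def GTPerspective {G X W : Type*} [TopologicalSpace X] [TopologicalSpace W]
    (φ : G → X → X) (f : Set X → Set W) : Prop :=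
  ∀ K : Set X, IsCompact K → ∀ y : W, ∀ U : Set (X ⊕ W),
    IsOpen[AWTop f] U → Sum.inr y ∈ U →
      ∃ V : Set (X ⊕ W), IsOpen[AWTop f] V ∧ Sum.inr y ∈ V ∧ V ⊆ U ∧
        ∀ g : G, (∃ x ∈ K, Sum.inl (φ g x) ∈ V) → ∀ x ∈ K, Sum.inl (φ g x) ∈ U

/-! ### Rays and accessibility -/

/-- A family `Ψ` of rays in `X` based at `p`: each member is a pair `(A, γ)` of a closed
unbounded subset `A ⊆ [0,∞)` containing `0` and a map `γ : ℝ → X` (regarded on `A`) which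
is injective on `A`, proper, and satisfies `γ 0 = p`. -/
def GoodRayFamily {X : Type*} [TopologicalSpace X] (p : X)
    (Ψ : Set (Set ℝ × (ℝ → X))) : Prop :=
  ∀ r ∈ Ψ, r.1 ⊆ Set.Ici (0 : ℝ) ∧ IsClosed r.1 ∧ ¬Bornology.IsBounded r.1 ∧
    (0 : ℝ) ∈ r.1 ∧ r.2 0 = p ∧ Set.InjOn r.2 r.1 ∧
    ∀ B : Set X, TopBounded B → Bornology.IsBounded (r.1 ∩ r.2 ⁻¹' B)

/-- The compactification `X +_f W` is `Ψ`-accessible. -/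
def AccessibleComp {X W : Type*} [TopologicalSpace X] [TopologicalSpace W]
    (f : Set X → Set W) (Ψ : Set (Set ℝ × (ℝ → X))) : Prop :=
  (∀ w : W, ∃ r ∈ Ψ, f (closure (r.2 '' r.1)) = {w}) ∧
  ∀ r ∈ Ψ, ∃ w : W, f (closure (r.2 '' r.1)) = {w}


section Aux

variable {X W : Type*} [TopologicalSpace X] [TopologicalSpace W]

lemma adm_mono {f : Set X → Set W} (hf : Admissible f) {A B : Set X}
    (hA : IsClosed A) (hB : IsClosed B) (h : A ⊆ B) : f A ⊆ f B := by
  have h2 := hf.2.1 A B hA hB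
  rw [Set.union_eq_self_of_subset_left h] at h2
  rw [h2]; exact Set.subset_union_left

lemma aw_empty {f : Set X → Set W} (hf : Admissible f) :
    (∅ : Set (X ⊕ W)) ∈ AWClosed f := by
  refine ⟨by simp, by simp, ?_⟩
  simp [hf.2.2]

lemma aw_union {f : Set X → Set W} (hf : Admissible f) {A B : Set (X ⊕ W)}
    (hA : A ∈ AWClosed f) (hB : B ∈ AWClosed f) : A ∪ B ∈ AWClosed f := by
  refine ⟨?_, ?_, ?_⟩
  · rw [Set.preimage_union]; exact hA.1.union hB.1
  · rw [Set.preimage_union]; exact hA.2.1.union hB.2.1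
  · rw [Set.preimage_union, hf.2.1 _ _ hA.1 hB.1, Set.image_union]
    exact Set.union_subset_union hA.2.2 hB.2.2

lemma aw_sInter {f : Set X → Set W} (hf : Admissible f) {T : Set (Set (X ⊕ W))}
    (hT : T ⊆ AWClosed f) : ⋂₀ T ∈ AWClosed f := by
  have hpre : IsClosed (Sum.inl ⁻¹' ⋂₀ T : Set X) := by
    rw [Set.preimage_sInter]
    exact isClosed_biInter fun A hA => (hT hA).1
  refine ⟨hpre, ?_, ?_⟩
  · rw [Set.preimage_sInter]
    exact isClosed_biInter fun A hA => (hT hA).2.1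
  · rintro z ⟨y, hy, rfl⟩
    rw [Set.mem_sInter]
    intro A hA
    apply (hT hA).2.2
    refine ⟨y, adm_mono hf hpre (hT hA).1 ?_ hy, rfl⟩
    exact Set.preimage_mono (Set.sInter_subset_of_mem hA)

lemma isClosed_aw_iff {f : Set X → Set W} (hf : Admissible f) {A : Set (X ⊕ W)} :
    IsClosed[AWTop f] A ↔ A ∈ AWClosed f := by
  constructor
  · intro h
    have h' : IsOpen[AWTop f] Aᶜ := (@isOpen_compl_iff _ A (AWTop f)).mpr h
    have main : ∀ U : Set (X ⊕ W),
        TopologicalSpace.GenerateOpen (compl '' AWClosed f) U → Uᶜ ∈ AWClosed f := by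
      intro U hU
      induction hU with
      | basic s hs => obtain ⟨B, hB, rfl⟩ := hs; rwa [compl_compl]
      | univ => simpa using aw_empty hf
      | inter s t _ _ ihs iht => rw [Set.compl_inter]; exact aw_union hf ihs iht
      | sUnion S _ ih =>
          rw [Set.compl_sUnion]
          exact aw_sInter hf (by rintro _ ⟨s, hs, rfl⟩; exact ih s hs)
    have := main Aᶜ h'
    rwa [compl_compl] at this
  · intro h
    rw [← @isOpen_compl_iff _ A (AWTop f)]
    exact TopologicalSpace.GenerateOpen.basic _ ⟨A, h, rfl⟩

lemma mem_cl_iff {f : Set X → Set W} (hf : Admissible f) (S : Set X) (y : W) :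
    Sum.inr y ∈ @closure _ (AWTop f) (Sum.inl '' S) ↔ y ∈ f (closure S) := by
  constructor
  · intro hy
    set A : Set (X ⊕ W) := Sum.inl '' closure S ∪ Sum.inr '' f (closure S) with hAdef
    have hpre1 : Sum.inl ⁻¹' A = closure S := by
      ext x; simp [hAdef]
    have hpre2 : Sum.inr ⁻¹' A = f (closure S) := by
      ext z; simp [hAdef]
    have hAcl : A ∈ AWClosed f := by
      refine ⟨?_, ?_, ?_⟩
      · rw [hpre1]; exact isClosed_closure
      · rw [hpre2]; exact hf.1 _ isClosed_closure
      · rw [hpre1]; exact Set.subset_union_right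
    have hsub : @closure _ (AWTop f) (Sum.inl '' S) ⊆ A := by
      exact @closure_minimal _ (AWTop f) _ _ (((Set.image_mono subset_closure).trans Set.subset_union_left))
        ((isClosed_aw_iff hf).mpr hAcl)
    rcases hsub hy with ⟨x, _, hx⟩ | ⟨z, hz, hzeq⟩
    · simp at hx
    · obtain rfl : z = y := Sum.inr_injective hzeq
      exact hz
  · intro hy
    set C := @closure _ (AWTop f) (Sum.inl '' S) with hCdef
    have hCcl : C ∈ AWClosed f := (isClosed_aw_iff hf).mp (@isClosed_closure _ (AWTop f) _)
    have hsub : closure S ⊆ Sum.inl ⁻¹' C := by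
      apply closure_minimal _ hCcl.1
      intro x hx
      have hsc : Sum.inl '' S ⊆ @closure _ (AWTop f) (Sum.inl '' S) :=
        @subset_closure _ (AWTop f) _
      exact hsc (Set.mem_image_of_mem _ hx)
    have : y ∈ f (Sum.inl ⁻¹' C) :=
      adm_mono hf isClosed_closure hCcl.1 hsub hy
    exact hCcl.2.2 ⟨y, this, rfl⟩

lemma persp_mono {f : Set X → Set W} {e : Set (X × X)} (he : PerspRel f e)
    {S S' : Set X} (h : ∀ s' ∈ S', ∃ s ∈ S, (s', s) ∈ e) {y : W}
    (hy : Sum.inr y ∈ @closure _ (AWTop f) (Sum.inl '' S')) :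
    Sum.inr y ∈ @closure _ (AWTop f) (Sum.inl '' S) := by
  rw [@mem_closure_iff _ (AWTop f) _ _] at hy
  rw [@mem_closure_iff _ (AWTop f) _ _]
  intro V hV hyV
  obtain ⟨U, hU, hyU, hUV, hUe⟩ := he.2 y V hV hyV
  obtain ⟨z, hzU, hzS'⟩ := hy U hU hyU
  obtain ⟨s', hs', rfl⟩ := hzS'
  obtain ⟨s, hs, hss⟩ := h s' hs'
  exact ⟨Sum.inl s, hUe (s', s) hss hzU, Set.mem_image_of_mem _ hs⟩

end Aux

/-- if `π : Y → X` is a coarse equivalence with coarse inverse `ϖ` and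
`X +_f W` is a `Ψ`-accessible perspective compactification, then the induced
compactification `Y +_{f*} W` is `ϖ(Ψ)`-accessible. -/
theorem stmt14 {X Y W : Type*} [TopologicalSpace X] [T2Space X] [LocallyCompactSpace X]
    [ParacompactSpace X] [TopologicalSpace Y] [T2Space Y] [LocallyCompactSpace Y]
    [ParacompactSpace Y] [TopologicalSpace W]
    (ε : Set (Set (X × X))) (η : Set (Set (Y × Y)))
    (hε : IsCoarseStructure ε) (hεconn : CoarselyConnected ε) (hεprop : ProperCoarse ε)
    (hη : IsCoarseStructure η) (hηconn : CoarselyConnected η) (hηprop : ProperCoarse η)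
    (π : Y → X) (ϖ : X → Y)
    (hπ : CoarseMap η ε π) (hϖ : CoarseMap ε η ϖ)
    (hqi1 : Close ε (π ∘ ϖ) id) (hqi2 : Close η (ϖ ∘ π) id)
    (f : Set X → Set W) (hf : PerspCompactification ε f)
    (p : X) (Ψ : Set (Set ℝ × (ℝ → X))) (hΨ : GoodRayFamily p Ψ)
    (hacc : AccessibleComp f Ψ) :
    (∀ w : W, ∃ r ∈ Ψ,
      pullbackAW f π (id : W → W) (closure ((fun t => ϖ (r.2 t)) '' r.1)) = {w}) ∧
    ∀ r ∈ Ψ, ∃ w : W,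
      pullbackAW f π (id : W → W) (closure ((fun t => ϖ (r.2 t)) '' r.1)) = {w} := by
  have hadm : Admissible f := hf.1.1
  have ht2 : @T2Space (X ⊕ W) (AWTop f) := hf.1.2.2.1
  obtain ⟨d, hd, hdnhds⟩ := hηprop.1
  -- the singleton `{w}` is closed in `W`
  have hsingleton : ∀ w : W, IsClosed ({w} : Set W) := by
    intro w
    haveI t1 : @T1Space (X ⊕ W) (AWTop f) := @T2Space.t1Space _ (AWTop f) ht2
    have h1 : IsClosed[AWTop f] ({Sum.inr w} : Set (X ⊕ W)) :=
      @isClosed_singleton _ (AWTop f) t1 _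
    have h2 := ((isClosed_aw_iff hadm).mp h1).2.1
    have h3 : (Sum.inr ⁻¹' ({Sum.inr w} : Set (X ⊕ W)) : Set W) = {w} := by
      ext z; simp
    rwa [h3] at h2
  have key : ∀ r ∈ Ψ, ∀ w : W, f (closure (r.2 '' r.1)) = {w} →
      pullbackAW f π (id : W → W) (closure ((fun t => ϖ (r.2 t)) '' r.1)) = {w} := by
    intro r _ w hr
    set S : Set X := r.2 '' r.1 with hSdef
    set T : Set Y := (fun t => ϖ (r.2 t)) '' r.1 with hTdef
    set S'' : Set X := π '' closure T with hS''def
    set e0 : Set (X × X) := Set.range (fun x : X => (π (ϖ x), x)) with he0def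
    have e0mem : e0 ∈ ε := hqi1
    set e1 : Set (X × X) := Prod.map π π '' d with he1def
    have e1mem : e1 ∈ ε := hπ.1 d hd
    set e2 : Set (X × X) := compRel e1 e0 with he2def
    have e2mem : e2 ∈ ε := hε.2.2.2.2 e1 e1mem e0 e0mem
    have e3mem : invRel e0 ∈ ε := hε.2.2.2.1 e0 e0mem
    -- every point of `closure T` is `d`-close to a point of `T`
    have hclT : ∀ y ∈ closure T, ∃ t ∈ T, (y, t) ∈ d := by
      intro y hy
      obtain ⟨O, hO, hdiag, hOd⟩ := mem_nhdsSet_iff_exists.mp hdnhds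
      have hyyO : (y, y) ∈ O := hdiag rfl
      obtain ⟨u, v, hu, hv, hyu, hyv, huv⟩ := isOpen_prod_iff.mp hO y y hyyO
      obtain ⟨t, ⟨_, htv⟩, htT⟩ :=
        mem_closure_iff.mp hy (u ∩ v) (hu.inter hv) ⟨hyu, hyv⟩
      exact ⟨t, htT, hOd (huv ⟨hyu, htv⟩)⟩
    have h1 : ∀ z ∈ S'', ∃ s ∈ S, (z, s) ∈ e2 := by
      rintro _ ⟨y, hyT, rfl⟩
      obtain ⟨t, htT, hyt⟩ := hclT y hyT
      obtain ⟨s₀, hs₀, rfl⟩ := htT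
      refine ⟨r.2 s₀, ⟨s₀, hs₀, rfl⟩, ?_⟩
      exact ⟨π (ϖ (r.2 s₀)), ⟨(y, ϖ (r.2 s₀)), hyt, rfl⟩, ⟨r.2 s₀, rfl⟩⟩
    have h2 : ∀ s ∈ S, ∃ z ∈ S'', (s, z) ∈ invRel e0 := by
      rintro _ ⟨s₀, hs₀, rfl⟩
      refine ⟨π (ϖ (r.2 s₀)), ⟨ϖ (r.2 s₀), subset_closure ⟨s₀, hs₀, rfl⟩, rfl⟩, ?_⟩
      exact ⟨r.2 s₀, rfl⟩
    have hfS'' : f (closure S'') = {w} := by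
      ext y
      constructor
      · intro hy
        have hy1 := (mem_cl_iff hadm S'' y).mpr hy
        have hy2 := persp_mono (hf.2 e2 e2mem) h1 hy1
        have hy3 := (mem_cl_iff hadm S y).mp hy2
        rwa [hr] at hy3
      · intro hy
        have hyS : y ∈ f (closure S) := by rw [hr]; exact hy
        have hy1 := (mem_cl_iff hadm S y).mpr hyS
        have hy2 := persp_mono (hf.2 _ e3mem) h2 hy1
        exact (mem_cl_iff hadm S'' y).mp hy2
    have hpull : pullbackAW f π (id : W → W) (closure T) = closure (f (closure S'')) := by
      simp only [pullbackAW, Set.preimage_id, hS''def]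
    rw [hpull, hfS'', (hsingleton w).closure_eq]
  refine ⟨fun w => ?_, fun r hrΨ => ?_⟩
  · obtain ⟨r, hrΨ, hrw⟩ := hacc.1 w
    exact ⟨r, hrΨ, key r hrΨ w hrw⟩
  · obtain ⟨w, hw⟩ := hacc.2 r hrΨ
    exact ⟨w, key r hrΨ w hw⟩

end Paper
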